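/- Let n ∈ ℕ, let A be an n×n complex unitary matrix such that I − A is invertible, and let f > 0 be a real number. Then ∫_{ℂⁿ} exp(f⁻¹·ψ₂(Au, u)) du = fⁿ · πⁿ / det(I − A), where ψ₂(Au,u) = i·Im⟨u, Au⟩ − ½‖Au − u‖² and the integral is with respect to Lebesgue measure on ℂⁿ ≅ ℝ^{2n}. -/

import Mathlib

open MeasureTheory Complex

/-- Lebesgue (Borel) measurable structure on ℂⁿ ≅ ℝ^{2n}. -/
noncomputable instance (n : ℕ) : MeasurableSpace (EuclideanSpace ℂ (Fin n)) :=
  MeasurableSpace.comap WithLp.ofLp MeasurableSpace.pi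

instance (n : ℕ) : BorelSpace (EuclideanSpace ℂ (Fin n)) := PiLp.borelSpace _

namespace Stmt3Aux

variable {n : ℕ}

lemma toEL_mul (M N : Matrix (Fin n) (Fin n) ℂ) (u : EuclideanSpace ℂ (Fin n)) :
    Matrix.toEuclideanLin M (Matrix.toEuclideanLin N u) =
      Matrix.toEuclideanLin (M * N) u := by
  simp [Matrix.toEuclideanLin_apply, Matrix.mulVec_mulVec]

lemma toEL_one (u : EuclideanSpace ℂ (Fin n)) :
    Matrix.toEuclideanLin (1 : Matrix (Fin n) (Fin n) ℂ) u = u := by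
  simp [Matrix.toEuclideanLin_apply]

lemma inner_toEL_left (M : Matrix (Fin n) (Fin n) ℂ) (u v : EuclideanSpace ℂ (Fin n)) :
    (inner ℂ (Matrix.toEuclideanLin M u) v : ℂ) =
      inner ℂ u (Matrix.toEuclideanLin (star M) v) := by
  rw [Matrix.star_eq_conjTranspose, Matrix.toEuclideanLin_conjTranspose_eq_adjoint,
    LinearMap.adjoint_inner_right]

lemma norm_toEL (M : Matrix (Fin n) (Fin n) ℂ) (hM : star M * M = 1)
    (u : EuclideanSpace ℂ (Fin n)) : ‖Matrix.toEuclideanLin M u‖ = ‖u‖ := by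
  have h : (inner ℂ (Matrix.toEuclideanLin M u) (Matrix.toEuclideanLin M u) : ℂ) = inner ℂ u u := by
    rw [inner_toEL_left, toEL_mul, hM, toEL_one]
  have h2 := congrArg Complex.re h
  rw [show ((inner ℂ ((Matrix.toEuclideanLin M) u) ((Matrix.toEuclideanLin M) u) : ℂ)).re
      = RCLike.re (inner ℂ ((Matrix.toEuclideanLin M) u) ((Matrix.toEuclideanLin M) u) : ℂ) from rfl,
    show ((inner ℂ u u : ℂ)).re = RCLike.re (inner ℂ u u : ℂ) from rfl,
    @inner_self_eq_norm_sq ℂ, @inner_self_eq_norm_sq ℂ] at h2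
  have := congrArg Real.sqrt h2
  simpa [Real.sqrt_sq, norm_nonneg] using this

lemma measurePreserving_isometry {E : Type*} [NormedAddCommGroup E] [InnerProductSpace ℝ E]
    [FiniteDimensional ℝ E] [MeasurableSpace E] [BorelSpace E] (e : E ≃ₗᵢ[ℝ] E) :
    MeasurePreserving e volume volume := by
  let s := stdOrthonormalBasis ℝ E
  have h1 := s.measurePreserving_repr
  have h2 := (s.map e).measurePreserving_repr_symm
  have he : (⇑e) = ⇑(s.map e).repr.symm ∘ ⇑s.repr := by
    funext x
    show e x = (s.map e).repr.symm (s.repr x)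
    have : (s.map e).repr = e.symm.trans s.repr := rfl
    rw [this]
    simp
  rw [he]
  exact h2.comp h1

lemma unitary_diagonalization (A : Matrix (Fin n) (Fin n) ℂ)
    (hA : A ∈ Matrix.unitaryGroup (Fin n) ℂ) (hinv : IsUnit (1 - A)) :
    ∃ V : Matrix (Fin n) (Fin n) ℂ, ∃ lam : Fin n → ℂ,
      star V * V = 1 ∧ V * star V = 1 ∧
      A = V * Matrix.diagonal lam * star V ∧ ∀ j, 0 < (1 - lam j).re := by
  classical
  have hA1 : star A * A = 1 := Matrix.mem_unitaryGroup_iff'.mp hA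
  -- inverse of 1 - A
  obtain ⟨Binv, hB1, hB2⟩ : ∃ Binv : Matrix (Fin n) (Fin n) ℂ,
      (1 - A) * Binv = 1 ∧ Binv * (1 - A) = 1 :=
    ⟨↑hinv.unit⁻¹, hinv.mul_val_inv, hinv.val_inv_mul⟩
  have hsB1 : star Binv * star (1 - A) = 1 := by rw [← star_mul, hB1, star_one]
  -- the Cayley transform
  set H : Matrix (Fin n) (Fin n) ℂ := Complex.I • ((1 + A) * Binv) with hHdef
  have key : (1 + star A) * (1 - A) = -((1 - star A) * (1 + A)) := by
    have e1 : (1 + star A) * (1 - A) = star A - A := by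
      rw [one_add_mul, mul_one_sub, hA1]; abel
    have e2 : (1 - star A) * (1 + A) = A - star A := by
      rw [one_sub_mul, mul_one_add, hA1]; abel
    rw [e1, e2, neg_sub]
  have hHherm : H.IsHermitian := by
    have hstar : star H = (-Complex.I) • (star Binv * (1 + star A)) := by
      rw [hHdef, star_smul, star_mul, star_add, star_one]
      simp [Complex.star_def]
    have hmain : star Binv * (1 + star A) = -((1 + A) * Binv) := by
      have h0 : star Binv * (1 + star A)
          = star Binv * ((1 + star A) * (1 - A)) * Binv := by
        have h1 : (1 + star A) * (1 - A) * Binv = (1 + star A) := by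
          rw [mul_assoc, hB1, mul_one]
        rw [mul_assoc (star Binv), h1]
      rw [h0, key]
      have h2 : (1 : Matrix (Fin n) (Fin n) ℂ) - star A = star (1 - A) := by
        rw [star_sub, star_one]
      calc star Binv * -((1 - star A) * (1 + A)) * Binv
          = -(star Binv * (1 - star A) * ((1 + A) * Binv)) := by noncomm_ring
        _ = -((1 + A) * Binv) := by rw [h2, hsB1, one_mul]
    unfold Matrix.IsHermitian
    rw [← Matrix.star_eq_conjTranspose, hstar, hmain, hHdef, smul_neg, neg_smul, neg_neg]
  -- spectral theorem for H
  set V : Matrix (Fin n) (Fin n) ℂ := ↑(hHherm.eigenvectorUnitary) with hVdef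
  have hVmem : V ∈ Matrix.unitaryGroup (Fin n) ℂ := hHherm.eigenvectorUnitary.2
  have hV1 : star V * V = 1 := Matrix.mem_unitaryGroup_iff'.mp hVmem
  have hV2 : V * star V = 1 := Matrix.mem_unitaryGroup_iff.mp hVmem
  set d : Fin n → ℝ := hHherm.eigenvalues with hddef
  have hspec : H = V * Matrix.diagonal (fun j => (d j : ℂ)) * star V := by
    have := hHherm.spectral_theorem
    exact this
  -- relation H(1-A) = I•(1+A) and solving for A
  have hrel : H * (1 - A) = Complex.I • (1 + A) := by
    rw [hHdef, smul_mul_assoc, mul_assoc, hB2, mul_one]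
  have hHA : H * A = H - (Complex.I • 1 + Complex.I • A) := by
    rw [mul_one_sub, smul_add] at hrel
    rw [eq_sub_iff_add_eq, add_comm]
    exact (sub_eq_iff_eq_add.mp hrel).symm
  have hsolve : (H + Complex.I • 1) * A = H - Complex.I • 1 := by
    rw [add_mul, hHA, smul_mul_assoc Complex.I (1 : Matrix (Fin n) (Fin n) ℂ) A, one_mul]
    abel
  -- diagonal matrices
  have hne : ∀ j, ((d j : ℂ) + Complex.I) ≠ 0 := by
    intro j h
    have := congrArg Complex.im h
    simp at this
  set Dp := Matrix.diagonal (fun j => (d j:ℂ) + Complex.I) with hDp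
  set Dm := Matrix.diagonal (fun j => (d j:ℂ) - Complex.I) with hDm
  set Di := Matrix.diagonal (fun j => ((d j:ℂ) + Complex.I)⁻¹) with hDi
  have hDiDp : Di * Dp = 1 := by
    rw [hDi, hDp, Matrix.diagonal_mul_diagonal,
      show (fun j => ((d j:ℂ) + Complex.I)⁻¹ * ((d j:ℂ) + Complex.I)) = fun _ => (1:ℂ) from
        funext fun j => inv_mul_cancel₀ (hne j), Matrix.diagonal_one]
  have hsmul1 : Complex.I • (1 : Matrix (Fin n) (Fin n) ℂ)
      = Matrix.diagonal (fun _ : Fin n => Complex.I) := by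
    ext i k
    by_cases h : i = k <;> simp [Matrix.diagonal_apply, Matrix.one_apply, h]
  have hconj1 : Complex.I • (1 : Matrix (Fin n) (Fin n) ℂ)
      = V * (Complex.I • 1) * star V := by
    rw [mul_smul_comm, mul_one, smul_mul_assoc, hV2]
  have hHp : H + Complex.I • 1 = V * Dp * star V := by
    rw [hspec]
    conv_lhs => rw [hconj1]
    rw [← add_mul, ← mul_add, hsmul1, Matrix.diagonal_add, hDp]
  have hHm : H - Complex.I • 1 = V * Dm * star V := by
    rw [hspec]
    conv_lhs => rw [hconj1]
    rw [← sub_mul, ← mul_sub, hsmul1, Matrix.diagonal_sub, hDm]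
  have hinvHp : (V * Di * star V) * (H + Complex.I • 1) = 1 := by
    rw [hHp]
    calc (V * Di * star V) * (V * Dp * star V)
        = V * (Di * ((star V * V) * Dp)) * star V := by noncomm_ring
      _ = 1 := by rw [hV1, one_mul, hDiDp, mul_one, hV2]
  have hAeq : A = V * Matrix.diagonal
      (fun j => ((d j:ℂ) + Complex.I)⁻¹ * ((d j:ℂ) - Complex.I)) * star V := by
    calc A = ((V * Di * star V) * (H + Complex.I • 1)) * A := by rw [hinvHp, one_mul]
      _ = (V * Di * star V) * ((H + Complex.I • 1) * A) := by rw [mul_assoc]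
      _ = (V * Di * star V) * (V * Dm * star V) := by rw [hsolve, hHm]
      _ = V * (Di * ((star V * V) * Dm)) * star V := by noncomm_ring
      _ = V * (Di * Dm) * star V := by rw [hV1, one_mul]
      _ = _ := by rw [hDi, hDm, Matrix.diagonal_mul_diagonal]
  refine ⟨V, _, hV1, hV2, hAeq, fun j => ?_⟩
  have h1 : (1:ℂ) - ((d j:ℂ) + Complex.I)⁻¹ * ((d j:ℂ) - Complex.I)
      = (2*Complex.I) / ((d j:ℂ) + Complex.I) := by
    field_simp [hne j]
    ring
  rw [h1, Complex.div_re]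
  simp only [Complex.mul_re, Complex.mul_im, Complex.I_re, Complex.I_im, Complex.add_re,
    Complex.add_im, Complex.ofReal_re, Complex.ofReal_im, Complex.re_ofNat, Complex.im_ofNat]
  have hnq : 0 < Complex.normSq ((d j:ℂ) + Complex.I) := Complex.normSq_pos.mpr (hne j)
  ring_nf
  positivity

-- pointwise algebraic identity
lemma alg1 (z : ℂ) (w r : ℝ) (f : ℝ) (hw : w = r + r - 2*z.re) :
    (f:ℂ)⁻¹ * (Complex.I * (z.im:ℂ) - (1/2:ℂ) * (w:ℂ)) = -((f:ℂ)⁻¹ * ((r:ℂ) - z)) := by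
  subst hw
  rw [← Complex.ofReal_inv]
  obtain ⟨x, y⟩ := z
  simp only [Complex.ext_iff, Complex.add_re, Complex.add_im, Complex.sub_re, Complex.sub_im,
    Complex.mul_re, Complex.mul_im, Complex.neg_re, Complex.neg_im, Complex.I_re, Complex.I_im,
    Complex.ofReal_re, Complex.ofReal_im, Complex.div_re, Complex.div_im, Complex.one_re,
    Complex.one_im, Complex.ofReal_mul, Complex.ofReal_sub, Complex.ofReal_add]
  constructor <;> ring_nf <;> simp [Complex.normSq] <;> ring

end Stmt3Aux


open Stmt3Aux in
/-- for a unitary n×n complex matrix A with I − A invertible and f > 0,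
∫_{ℂⁿ} exp(f⁻¹·ψ₂(Au,u)) du = fⁿ·πⁿ / det(I − A), with
ψ₂(Au,u) = i·Im⟨u,Au⟩ − ½‖Au−u‖². -/
theorem stmt3 (n : ℕ) (A : Matrix (Fin n) (Fin n) ℂ)
    (hA : A ∈ Matrix.unitaryGroup (Fin n) ℂ) (hinv : IsUnit (1 - A))
    (f : ℝ) (hf : 0 < f) :
    ∫ u : EuclideanSpace ℂ (Fin n),
        Complex.exp (((f : ℂ))⁻¹ *
          (Complex.I * (((inner ℂ u (Matrix.toEuclideanLin A u) : ℂ)).im : ℂ)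
            - (1 / 2 : ℂ) * ((‖Matrix.toEuclideanLin A u - u‖ ^ 2 : ℝ) : ℂ)))
      = (f : ℂ) ^ n * ((Real.pi : ℂ)) ^ n / (1 - A).det := by
  classical
  obtain ⟨V, lam, hV1, hV2, hAeq, hre⟩ := unitary_diagonalization A hA hinv
  have hA1 : star A * A = 1 := Matrix.mem_unitaryGroup_iff'.mp hA
  have hf0 : (f:ℂ) ≠ 0 := by exact_mod_cast hf.ne'
  set c : Fin n → ℂ := fun j => (1 - lam j) * (f:ℂ)⁻¹ with hc
  have hcre : ∀ j, 0 < (c j).re := by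
    intro j
    have : (c j).re = (1 - lam j).re * f⁻¹ := by
      rw [hc, ← Complex.ofReal_inv, Complex.mul_re]
      simp
    rw [this]
    exact mul_pos (hre j) (inv_pos.mpr hf)
  have hc0 : ∀ j, c j ≠ 0 := by
    intro j h
    have := hcre j
    rw [h] at this
    simp at this
  have hμ0 : ∀ j, (1 : ℂ) - lam j ≠ 0 := by
    intro j h
    have := hre j
    rw [h] at this
    simp at this
  have hdiag : (1 : Matrix (Fin n) (Fin n) ℂ) - Matrix.diagonal lam
      = Matrix.diagonal (fun j => 1 - lam j) := by
    ext i k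
    by_cases h : i = k <;> simp [Matrix.diagonal_apply, Matrix.one_apply, h]
  -- step 1 : pointwise rewriting to a quadratic form
  have hpt1 : ∀ u : EuclideanSpace ℂ (Fin n),
      (f:ℂ)⁻¹ * (Complex.I * (((inner ℂ u (Matrix.toEuclideanLin A u) : ℂ)).im : ℂ)
          - (1/2:ℂ) * ((‖Matrix.toEuclideanLin A u - u‖^2 : ℝ) : ℂ))
        = -((f:ℂ)⁻¹ * (inner ℂ u (Matrix.toEuclideanLin (1 - A) u) : ℂ)) := by
    intro u
    have hnorm : ‖Matrix.toEuclideanLin A u‖ = ‖u‖ := norm_toEL A hA1 u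
    have hLB : Matrix.toEuclideanLin (1 - A) u = u - Matrix.toEuclideanLin A u := by
      rw [map_sub, LinearMap.sub_apply, toEL_one]
    have hinner : (inner ℂ u (Matrix.toEuclideanLin (1-A) u) : ℂ)
        = ((‖u‖^2 : ℝ) : ℂ) - inner ℂ u (Matrix.toEuclideanLin A u) := by
      rw [hLB, inner_sub_right, inner_self_eq_norm_sq_to_K]
      norm_cast
    have hns : (‖Matrix.toEuclideanLin A u - u‖^2 : ℝ)
        = ‖u‖^2 + ‖u‖^2 - 2 * (inner ℂ u (Matrix.toEuclideanLin A u) : ℂ).re := by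
      have h := norm_sub_sq (𝕜 := ℂ) (Matrix.toEuclideanLin A u) u
      rw [h, hnorm]
      have h2 : RCLike.re (inner ℂ (Matrix.toEuclideanLin A u) u : ℂ)
          = (inner ℂ u (Matrix.toEuclideanLin A u) : ℂ).re := by
        rw [← inner_conj_symm (𝕜 := ℂ) u (Matrix.toEuclideanLin A u)]
        exact (Complex.conj_re _).symm
      rw [h2]
      ring
    rw [hinner]
    exact alg1 _ _ _ f hns
  -- the unitary change of variables
  let eL : EuclideanSpace ℂ (Fin n) ≃ₗ[ℂ] EuclideanSpace ℂ (Fin n) :=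
    LinearEquiv.ofLinear (Matrix.toEuclideanLin V) (Matrix.toEuclideanLin (star V))
      (by ext u; simp only [LinearMap.comp_apply, LinearMap.id_apply]; rw [toEL_mul, hV2, toEL_one])
      (by ext u; simp only [LinearMap.comp_apply, LinearMap.id_apply]; rw [toEL_mul, hV1, toEL_one])
  let erV : EuclideanSpace ℂ (Fin n) ≃ₗᵢ[ℝ] EuclideanSpace ℂ (Fin n) :=
    { toLinearEquiv := eL.restrictScalars ℝ, norm_map' := fun u => norm_toEL V hV1 u }
  have hmp := measurePreserving_isometry erV
  have hemb : MeasurableEmbedding erV := erV.toHomeomorph.measurableEmbedding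
  have hpt2 : ∀ u : EuclideanSpace ℂ (Fin n),
      (inner ℂ (erV u) (Matrix.toEuclideanLin (1 - A) (erV u)) : ℂ)
        = ∑ j, (1 - lam j) * ((Complex.normSq (u j) : ℝ) : ℂ) := by
    intro u
    show (inner ℂ (Matrix.toEuclideanLin V u)
        (Matrix.toEuclideanLin (1 - A) (Matrix.toEuclideanLin V u)) : ℂ) = _
    rw [inner_toEL_left, toEL_mul, toEL_mul]
    have hmat : (star V * (1 - A)) * V = Matrix.diagonal (fun j => 1 - lam j) := by
      rw [hAeq]
      have h1 : star V * (1 - V * Matrix.diagonal lam * star V) * V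
          = star V * V - (star V * V) * Matrix.diagonal lam * (star V * V) := by noncomm_ring
      rw [h1, hV1, one_mul, mul_one, hdiag]
    rw [hmat, Matrix.toEuclideanLin_apply, PiLp.inner_apply]
    apply Finset.sum_congr rfl
    intro j _
    simp only [RCLike.inner_apply, PiLp.toLp_apply,
      Matrix.mulVec_diagonal]
    rw [Complex.normSq_eq_conj_mul_self]
    ring
  -- real orthonormal coordinates
  let bE : OrthonormalBasis ((_ : Fin n) × Fin 2) ℝ (EuclideanSpace ℂ (Fin n)) :=
    Pi.orthonormalBasis (fun _ : Fin n => Complex.orthonormalBasisOneI)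
  have hmp2 := bE.measurePreserving_repr_symm
  have hemb2 : MeasurableEmbedding bE.repr.symm :=
    bE.repr.symm.toHomeomorph.measurableEmbedding
  have hcoord : ∀ (x : EuclideanSpace ℝ ((_ : Fin n) × Fin 2)) (j : Fin n),
      ((Complex.normSq ((bE.repr.symm x) j) : ℝ) : ℂ)
        = ((x ⟨j,0⟩ : ℝ) : ℂ)^2 + ((x ⟨j,1⟩ : ℝ) : ℂ)^2 := by
    intro x j
    have h0 : bE.repr (bE.repr.symm x) = x := bE.repr.apply_symm_apply x
    have hre : x ⟨j,0⟩ = ((bE.repr.symm x) j).re := by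
      conv_lhs => rw [← h0]
      show Complex.orthonormalBasisOneI.repr ((bE.repr.symm x) j) 0 = _
      rw [Complex.orthonormalBasisOneI_repr_apply]
      simp
    have him : x ⟨j,1⟩ = ((bE.repr.symm x) j).im := by
      conv_lhs => rw [← h0]
      show Complex.orthonormalBasisOneI.repr ((bE.repr.symm x) j) 1 = _
      rw [Complex.orthonormalBasisOneI_repr_apply]
      simp
    rw [hre, him, Complex.normSq_apply]
    push_cast
    ring
  -- to the plain pi-type
  have hmp3 := (EuclideanSpace.volume_preserving_symm_measurableEquiv_toLp ((_ : Fin n) × Fin 2)).symm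
  have hemb3 := (MeasurableEquiv.toLp 2 (((_ : Fin n) × Fin 2) → ℝ)).symm.symm.measurableEmbedding
  have hcoord3 : ∀ (v : ((_ : Fin n) × Fin 2) → ℝ) (p : (_ : Fin n) × Fin 2),
      ((MeasurableEquiv.toLp 2 (((_ : Fin n) × Fin 2) → ℝ)).symm.symm v) p = v p := fun v p => rfl
  -- main calculation
  calc ∫ u : EuclideanSpace ℂ (Fin n),
        Complex.exp (((f : ℂ))⁻¹ *
          (Complex.I * (((inner ℂ u (Matrix.toEuclideanLin A u) : ℂ)).im : ℂ)
            - (1 / 2 : ℂ) * ((‖Matrix.toEuclideanLin A u - u‖ ^ 2 : ℝ) : ℂ)))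
      = ∫ u : EuclideanSpace ℂ (Fin n),
          Complex.exp (-((f:ℂ)⁻¹ * (inner ℂ u (Matrix.toEuclideanLin (1 - A) u) : ℂ))) := by
        congr 1
        funext u
        exact congrArg Complex.exp (hpt1 u)
    _ = ∫ u : EuclideanSpace ℂ (Fin n),
          Complex.exp (-((f:ℂ)⁻¹ *
            (inner ℂ (erV u) (Matrix.toEuclideanLin (1 - A) (erV u)) : ℂ))) := by
        exact (hmp.integral_comp hemb (fun w => Complex.exp
          (-((f:ℂ)⁻¹ * (inner ℂ w (Matrix.toEuclideanLin (1-A) w) : ℂ))))).symm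
    _ = ∫ u : EuclideanSpace ℂ (Fin n),
          Complex.exp (-∑ j, c j * ((Complex.normSq (u j) : ℝ) : ℂ)) := by
        congr 1
        funext u
        refine congrArg Complex.exp ?_
        rw [hpt2, Finset.mul_sum]
        congr 1
        apply Finset.sum_congr rfl
        intro j _
        simp only [hc]
        ring
    _ = ∫ x : EuclideanSpace ℝ ((_ : Fin n) × Fin 2),
          Complex.exp (-∑ j, c j * (((x ⟨j,0⟩ : ℝ) : ℂ)^2 + ((x ⟨j,1⟩ : ℝ) : ℂ)^2)) := by
        rw [← hmp2.integral_comp hemb2]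
        congr 1
        funext x
        simp only [hcoord]
    _ = ∫ v : ((_ : Fin n) × Fin 2) → ℝ,
          Complex.exp (-∑ p : (_ : Fin n) × Fin 2, (c p.1) * ((v p : ℝ) : ℂ)^2
            + ∑ p : (_ : Fin n) × Fin 2, (0:ℂ) * ((v p : ℝ) : ℂ)) := by
        rw [← hmp3.integral_comp hemb3]
        congr 1
        funext v
        refine congrArg Complex.exp ?_
        simp only [hcoord3]
        rw [show ∑ p : (_ : Fin n) × Fin 2, (0:ℂ) * ((v p : ℝ) : ℂ) = 0 by simp, add_zero]
        congr 1
        rw [← Finset.univ_sigma_univ, Finset.sum_sigma]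
        apply Finset.sum_congr rfl
        intro j _
        rw [Fin.sum_univ_two]
        ring
    _ = ∏ p : (_ : Fin n) × Fin 2, ((Real.pi : ℂ) / c p.1) ^ (1/2 : ℂ)
          * Complex.exp ((0:ℂ)^2 / (4 * c p.1)) := by
        have h := GaussianFourier.integral_cexp_neg_sum_mul_add
          (b := fun p : (_ : Fin n) × Fin 2 => c p.1) (fun p => hcre p.1) (fun _ => (0:ℂ))
        convert h using 2
    _ = ∏ j, ((Real.pi : ℂ) / c j) := by
        have hπc : ∀ j, ((Real.pi : ℂ) / c j) ≠ 0 :=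
          fun j => div_ne_zero (Complex.ofReal_ne_zero.mpr Real.pi_ne_zero) (hc0 j)
        have h1 : ∀ p : (_ : Fin n) × Fin 2, Complex.exp ((0:ℂ)^2 / (4 * c p.1)) = 1 := by
          intro p
          simp
        simp only [h1, mul_one]
        rw [← Finset.univ_sigma_univ, Finset.prod_sigma]
        apply Finset.prod_congr rfl
        intro j _
        rw [Fin.prod_univ_two, ← Complex.cpow_add _ _ (hπc j)]
        norm_num
    _ = (f : ℂ) ^ n * ((Real.pi : ℂ)) ^ n / (1 - A).det := by
        have hdet : (1 - A).det = ∏ j, (1 - lam j) := by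
          have h1 : (1:Matrix (Fin n) (Fin n) ℂ) - A
              = V * Matrix.diagonal (fun j => 1 - lam j) * star V := by
            rw [hAeq, ← hdiag]
            have h2 : V * (1 - Matrix.diagonal lam) * star V
                = V * star V - V * Matrix.diagonal lam * star V := by noncomm_ring
            rw [h2, hV2]
          rw [h1, Matrix.det_mul_right_comm, hV2, one_mul, Matrix.det_diagonal]
        rw [hdet]
        have h3 : ∀ j, ((Real.pi : ℂ) / c j) = ((Real.pi : ℂ) * (f:ℂ)) / (1 - lam j) := by
          intro j
          simp only [hc]
          field_simp
        rw [Finset.prod_congr rfl (fun j _ => h3 j), Finset.prod_div_distrib, Finset.prod_const,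
          Finset.card_univ, Fintype.card_fin, mul_pow]
        ring
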